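/- The function φ(z) = (1−z)^{−α−β} · P_n(z; −β, −α) satisfies the generalized eigenvalue equation L₁ φ = (n − α − β) L₂ φ, where L₁ = z(1−z)∂_z² + (1−β−(2+α)z)∂_z and L₂ = (1−z)∂_z − (α+1)I. -/

import Mathlib

open Finset

noncomputable def poch (a : ℝ) (k : ℕ) : ℝ := ∏ i ∈ Finset.range k, (a + i)

noncomputable def HR (n : ℕ) (α β : ℝ) (z : ℝ) : ℝ :=
  (poch β n / poch (α + 1) n) *
    ∑ k ∈ Finset.range (n + 1),
      (poch (-(n : ℝ)) k * poch (α + 1) k) / ((k.factorial : ℝ) * poch (1 - β - (n : ℝ)) k) * z ^ k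

/-! ### Auxiliary definitions -/

noncomputable def ecoef (n : ℕ) (α β : ℝ) (k : ℕ) : ℝ :=
  poch (-(n : ℝ)) k * poch (-β + 1) k / ((k.factorial : ℝ) * poch (1 - -α - (n : ℝ)) k)

noncomputable def Sfun (n : ℕ) (α β : ℝ) (t : ℝ) : ℝ :=
  ∑ k ∈ Finset.range (n + 1), ecoef n α β k * t ^ k

noncomputable def S1fun (n : ℕ) (α β : ℝ) (t : ℝ) : ℝ :=
  ∑ k ∈ Finset.range (n + 1), ecoef n α β k * ((k : ℝ) * t ^ (k - 1))

noncomputable def S2fun (n : ℕ) (α β : ℝ) (t : ℝ) : ℝ :=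
  ∑ k ∈ Finset.range (n + 1), ecoef n α β k * ((k : ℝ) * (((k - 1 : ℕ) : ℝ) * t ^ (k - 2)))

lemma poch_succ (a : ℝ) (k : ℕ) : poch a (k + 1) = poch a k * (a + k) :=
  Finset.prod_range_succ _ _

lemma poch_ne_zero {a : ℝ} {k : ℕ} (h : ∀ i < k, a + (i : ℝ) ≠ 0) : poch a k ≠ 0 := by
  unfold poch
  exact Finset.prod_ne_zero_iff.mpr fun i hi => h i (Finset.mem_range.mp hi)

lemma ecoef_top (n : ℕ) (α β : ℝ) : ecoef n α β (n + 1) = 0 := by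
  unfold ecoef
  have h : poch (-(n : ℝ)) (n + 1) = 0 :=
    Finset.prod_eq_zero (Finset.self_mem_range_succ n) (by simp)
  rw [h, zero_mul, zero_div]

lemma ecoef_rec (n : ℕ) (α β : ℝ) (hd : ∀ j < n, 1 + α - (n : ℝ) + (j : ℝ) ≠ 0)
    (k : ℕ) (hk : k < n) :
    ((k : ℝ) + 1) * (((k : ℝ) + 1) + α - n) * ecoef n α β (k + 1)
      = ((k : ℝ) - n) * (((k : ℝ) + 1) - β) * ecoef n α β k := by
  have hden : poch (1 - -α - (n : ℝ)) k ≠ 0 := by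
    apply poch_ne_zero
    intro i hi
    have := hd i (lt_trans hi hk)
    intro hcon; apply this; linarith
  have hden2 : (1 - -α - (n : ℝ) + k) ≠ 0 := by
    have := hd k hk
    intro hcon; apply this; linarith
  have hfac : (k.factorial : ℝ) ≠ 0 := Nat.cast_ne_zero.mpr k.factorial_ne_zero
  have hk1 : ((k : ℝ) + 1) ≠ 0 := by positivity
  unfold ecoef
  simp only [poch_succ, Nat.factorial_succ, Nat.cast_mul, Nat.cast_add, Nat.cast_one]
  rw [← mul_div_assoc, ← mul_div_assoc, div_eq_div_iff
    (by exact mul_ne_zero (mul_ne_zero hk1 hfac) (mul_ne_zero hden hden2))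
    (mul_ne_zero hfac hden)]
  ring

lemma key_identity (n : ℕ) (α β : ℝ) (hd : ∀ j < n, 1 + α - (n : ℝ) + (j : ℝ) ≠ 0) (z : ℝ) :
    z * (1 - z) * S2fun n α β z + (1 + α - (n : ℝ) + (β + (n : ℝ) - 2) * z) * S1fun n α β z
      + (n : ℝ) * (1 - β) * Sfun n α β z = 0 := by
  unfold Sfun S1fun S2fun
  rw [Finset.mul_sum, Finset.mul_sum, Finset.mul_sum, ← Finset.sum_add_distrib,
    ← Finset.sum_add_distrib]
  have hsplit : ∀ k ∈ Finset.range (n + 1),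
      z * (1 - z) * (ecoef n α β k * ((k : ℝ) * (((k - 1 : ℕ) : ℝ) * z ^ (k - 2))))
        + (1 + α - (n : ℝ) + (β + (n : ℝ) - 2) * z) * (ecoef n α β k * ((k : ℝ) * z ^ (k - 1)))
        + (n : ℝ) * (1 - β) * (ecoef n α β k * z ^ k)
      = ecoef n α β k * ((k : ℝ) * ((k : ℝ) + α - n)) * z ^ (k - 1)
        + -(((k : ℝ) - n) * (((k : ℝ) + 1) - β)) * (ecoef n α β k * z ^ k) := by
    intro k _
    match k with
    | 0 => first | (norm_num; ring) | norm_num | (simp; ring) | simp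
    | 1 => first | (norm_num; ring) | norm_num | (simp; ring) | simp
    | (m + 2) =>
      have h2 : m + 2 - 2 = m := by omega
      have h1 : m + 2 - 1 = m + 1 := by omega
      rw [h2, h1]
      push_cast
      ring
  rw [Finset.sum_congr rfl hsplit, Finset.sum_add_distrib]
  have hP : ∑ k ∈ Finset.range (n + 1),
      ecoef n α β k * ((k : ℝ) * ((k : ℝ) + α - n)) * z ^ (k - 1)
      = ∑ k ∈ Finset.range (n + 1),
        ecoef n α β (k + 1) * (((k : ℝ) + 1) * (((k : ℝ) + 1) + α - n)) * z ^ k := by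
    rw [Finset.sum_range_succ'
      (fun k => ecoef n α β k * ((k : ℝ) * ((k : ℝ) + α - n)) * z ^ (k - 1)) n,
      Finset.sum_range_succ, ecoef_top]
    simp only [Nat.cast_zero, zero_mul, mul_zero, add_zero]
    apply Finset.sum_congr rfl
    intro i _
    have : i + 1 - 1 = i := by omega
    rw [this]
    push_cast
    ring
  rw [hP, ← Finset.sum_add_distrib]
  apply Finset.sum_eq_zero
  intro k hk
  have hkn : k ≤ n := Nat.lt_succ_iff.mp (Finset.mem_range.mp hk)
  rcases eq_or_lt_of_le hkn with h | h
  · subst h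
    rw [ecoef_top]
    ring
  · have hrec := ecoef_rec n α β hd k h
    linear_combination z ^ k * hrec

lemma hasDerivAt_Sfun (n : ℕ) (α β : ℝ) (t : ℝ) :
    HasDerivAt (fun u => Sfun n α β u) (S1fun n α β t) t := by
  unfold Sfun S1fun
  exact HasDerivAt.fun_sum fun k _ => (hasDerivAt_pow k t).const_mul _

lemma hasDerivAt_S1fun (n : ℕ) (α β : ℝ) (t : ℝ) :
    HasDerivAt (fun u => S1fun n α β u) (S2fun n α β t) t := by
  unfold S1fun S2fun
  refine HasDerivAt.fun_sum fun k _ => ?_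
  have h := ((hasDerivAt_pow (k - 1) t).const_mul ((k : ℝ))).const_mul (ecoef n α β k)
  have h2 : k - 1 - 1 = k - 2 := by omega
  rw [h2] at h
  exact h

theorem hr_quasi_eigenfunction_type2 (n : ℕ) (α β : ℝ)
    (hβ : ∀ j < n, -α + (j : ℝ) ≠ 0)
    (hα : ∀ j < n, -β + 1 + (j : ℝ) ≠ 0)
    (hd : ∀ j < n, 1 + α - (n : ℝ) + (j : ℝ) ≠ 0) :
    ∀ z : ℝ, z < 1 →
      z * (1 - z) * deriv (deriv (fun t => (1 - t) ^ (-(α + β)) * HR n (-β) (-α) t)) z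
        + (1 - β - (2 + α) * z) * deriv (fun t => (1 - t) ^ (-(α + β)) * HR n (-β) (-α) t) z
      = ((n : ℝ) - α - β) *
          ((1 - z) * deriv (fun t => (1 - t) ^ (-(α + β)) * HR n (-β) (-α) t) z
            - (α + 1) * ((1 - z) ^ (-(α + β)) * HR n (-β) (-α) z)) := by
  intro z hz
  have h1z : (0 : ℝ) < 1 - z := by linarith
  have hHR : ∀ t : ℝ, HR n (-β) (-α) t
      = (poch (-α) n / poch (-β + 1) n) * Sfun n α β t := fun t => rfl
  have hfun : (fun t : ℝ => (1 - t) ^ (-(α + β)) * HR n (-β) (-α) t)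
      = fun t : ℝ => (poch (-α) n / poch (-β + 1) n)
          * ((1 - t) ^ (-(α + β)) * Sfun n α β t) := by
    funext t; rw [hHR t]; ring
  rw [hfun, hHR z]
  set K : ℝ := poch (-α) n / poch (-β + 1) n with hKdef
  -- derivative of ψ t = (1-t)^(-(α+β)) * Sfun t on Iio 1
  have hone : ∀ t : ℝ, HasDerivAt (fun u : ℝ => 1 - u) (-1) t := by
    intro t
    simpa using (hasDerivAt_id t).const_sub 1
  have hψd : ∀ t : ℝ, t < 1 → HasDerivAt (fun u : ℝ => (1 - u) ^ (-(α + β)) * Sfun n α β u)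
      ((α + β) * (1 - t) ^ (-(α + β) - 1) * Sfun n α β t
        + (1 - t) ^ (-(α + β)) * S1fun n α β t) t := by
    intro t ht
    have h1t : (0 : ℝ) < 1 - t := by linarith
    have := ((hone t).rpow_const (p := -(α + β)) (Or.inl h1t.ne')).fun_mul
      (hasDerivAt_Sfun n α β t)
    exact this.congr_deriv (by ring)
  -- pull the constant K out of the derivatives
  have hKd : (deriv fun t : ℝ => K * ((1 - t) ^ (-(α + β)) * Sfun n α β t))
      = fun x : ℝ => K * deriv (fun t : ℝ => (1 - t) ^ (-(α + β)) * Sfun n α β t) x := by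
    funext x
    exact deriv_const_mul_field K
  simp only [hKd, deriv_const_mul_field]
  -- first derivative value
  have hD1 : deriv (fun t : ℝ => (1 - t) ^ (-(α + β)) * Sfun n α β t) z
      = (α + β) * (1 - z) ^ (-(α + β) - 1) * Sfun n α β z
        + (1 - z) ^ (-(α + β)) * S1fun n α β z := (hψd z hz).deriv
  -- second derivative value
  have hev : deriv (fun t : ℝ => (1 - t) ^ (-(α + β)) * Sfun n α β t)
      =ᶠ[nhds z] fun t : ℝ => (α + β) * (1 - t) ^ (-(α + β) - 1) * Sfun n α β t
        + (1 - t) ^ (-(α + β)) * S1fun n α β t := by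
    filter_upwards [Iio_mem_nhds hz] with t ht
    exact (hψd t ht).deriv
  have hDfun := ((((hone z).rpow_const (p := -(α + β) - 1)
        (Or.inl h1z.ne')).const_mul (α + β)).fun_mul (hasDerivAt_Sfun n α β z)).fun_add
    (((hone z).rpow_const (p := -(α + β)) (Or.inl h1z.ne')).fun_mul (hasDerivAt_S1fun n α β z))
  have hD2 : deriv (deriv fun t : ℝ => (1 - t) ^ (-(α + β)) * Sfun n α β t) z
      = ((α + β) * ((α + β) + 1)) * (1 - z) ^ (-(α + β) - 1 - 1) * Sfun n α β z
        + 2 * (α + β) * (1 - z) ^ (-(α + β) - 1) * S1fun n α β z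
        + (1 - z) ^ (-(α + β)) * S2fun n α β z := by
    rw [hev.deriv_eq, hDfun.deriv]
    ring
  rw [hD2, hD1]
  -- rewrite rpowers in terms of the lowest one
  have hBpow : (1 - z) ^ (-(α + β) - 1) = (1 - z) * (1 - z) ^ (-(α + β) - 1 - 1) := by
    rw [show -(α + β) - 1 = (-(α + β) - 1 - 1) + 1 by ring, Real.rpow_add h1z, Real.rpow_one]
    ring
  have hApow : (1 - z) ^ (-(α + β)) = (1 - z) * ((1 - z) * (1 - z) ^ (-(α + β) - 1 - 1)) := by
    rw [show -(α + β) = (-(α + β) - 1 - 1) + 1 + 1 by ring, Real.rpow_add h1z,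
      Real.rpow_add h1z, Real.rpow_one]
    ring
  rw [hApow, hBpow]
  have hkey := key_identity n α β hd z
  linear_combination (K * ((1 - z) * (1 - z) * (1 - z) ^ (-(α + β) - 1 - 1))) * hkey
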